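/- Let (ν_i) be a sequence of strictly aperiodic probability measures on ℤ such that E(ν_i) = 0 for all i, and suppose there exist a constant C > 0 and an integer N₀ > 0 such that |ν̂_n(t)| ≤ e^{−Ct²} for all n > N₀ and all t ∈ [−1/2, 1/2). Let μ_n = ν₁ * … * ν_n. Then there is a constant C' such that for every k ≥ 1, every n with 4^{k−1} ≤ n < 4^k, and every t ∈ [−1/2, 1/2) with t ≠ 0, |μ̂_n(t) − μ̂_{4^{k−1}}(t)| ≤ C' / (4^k t²). -/

import Mathlib

open scoped ENNReal NNReal BigOperators
open MeasureTheory

noncomputable section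

/-- A probability measure on ℤ, viewed as a nonnegative function summing to 1. -/
def IsProbZ (ν : ℤ → ℝ) : Prop := (∀ k, 0 ≤ ν k) ∧ HasSum ν 1

/-- Fourier transform of a measure on ℤ: ν̂(t) = ∑ₖ ν(k) e^{-2πikt}. -/
def fourierZ (ν : ℤ → ℝ) (t : ℝ) : ℂ :=
  ∑' k : ℤ, (ν k : ℂ) * Complex.exp ((-2 * (Real.pi : ℂ) * Complex.I) * (k : ℂ) * (t : ℂ))

/-- p-th moment of a measure on ℤ. -/
def moment (p : ℝ) (ν : ℤ → ℝ) : ℝ := ∑' k : ℤ, |(k : ℝ)| ^ p * ν k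

/-- ν is strictly aperiodic: its support is not contained in any coset of a
proper subgroup of ℤ. -/
def StrictlyAperiodic (ν : ℤ → ℝ) : Prop :=
  ¬ ∃ (H : AddSubgroup ℤ) (a : ℤ), H ≠ ⊤ ∧ ∀ k, ν k ≠ 0 → k - a ∈ H

/-- Convolution of two measures on ℤ. -/
def convZ (ν₁ ν₂ : ℤ → ℝ) : ℤ → ℝ := fun k => ∑' j : ℤ, ν₁ j * ν₂ (k - j)

/-- `convProd ν n = ν 1 * ⋯ * ν n` (convolution product), with `convProd ν 0 = δ₀`. -/
def convProd (ν : ℕ → ℤ → ℝ) : ℕ → ℤ → ℝ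
  | 0 => fun k => if k = 0 then 1 else 0
  | n + 1 => convZ (convProd ν n) (ν (n + 1))

/-- Variation ρ-norm of a sequence of reals over an index set `I ⊆ ℕ`:
the sup over nondecreasing sequences with values in `I` of
`(∑ⱼ |x_{n(j)} - x_{n(j+1)}|^ρ)^{1/ρ}`, valued in `ℝ≥0∞`. -/
def vNorm (ρ : ℝ) (I : Set ℕ) (x : ℕ → ℝ) : ℝ≥0∞ :=
  ⨆ (n : ℕ → ℕ) (_ : Monotone n) (_ : ∀ j, n j ∈ I),
    (∑' j : ℕ, (ENNReal.ofReal |x (n j) - x (n (j + 1))|) ^ ρ) ^ (1 / ρ)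

/-- Oscillation s-norm of a sequence of reals relative to the increasing
sequence `nk` of indices. -/
def oNorm (s : ℝ) (nk : ℕ → ℕ) (x : ℕ → ℝ) : ℝ≥0∞ :=
  (∑' k : ℕ,
    (⨆ (n : ℕ) (_ : nk k ≤ n ∧ n ≤ nk (k + 1)), ENNReal.ofReal |x n - x (nk k)|) ^ s) ^ (1 / s)

/-- Action of a measure on ℤ on a function via a (bi-)measure-preserving map:
`μ f (x) = ∑ⱼ μ(j) f(T^j x)`. -/
def act {X : Type*} (T : Equiv.Perm X) (μ : ℤ → ℝ) (f : X → ℝ) (x : X) : ℝ :=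
  ∑' j : ℤ, μ j * f ((T ^ j) x)

end


namespace FDDBaux

noncomputable def eC (k : ℤ) (t : ℝ) : ℂ :=
  Complex.exp ((-2 * (Real.pi : ℂ) * Complex.I) * (k : ℂ) * (t : ℂ))

lemma abs_eC (k : ℤ) (t : ℝ) : ‖eC k t‖ = 1 := by
  rw [eC, Complex.norm_exp]
  have h : ((-2 * (Real.pi : ℂ) * Complex.I) * (k : ℂ) * (t : ℂ)).re = 0 := by
    simp [Complex.mul_re, Complex.mul_im]
  rw [h, Real.exp_zero]

lemma eC_add (j k : ℤ) (t : ℝ) : eC (j + k) t = eC j t * eC k t := by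
  rw [eC, eC, eC, ← Complex.exp_add]
  congr 1
  push_cast
  ring

lemma eC_zero (t : ℝ) : eC 0 t = 1 := by
  simp [eC]

lemma fourierZ_eq (ν : ℤ → ℝ) (t : ℝ) : fourierZ ν t = ∑' k : ℤ, (ν k : ℂ) * eC k t := rfl

lemma summable_norm_term {ν : ℤ → ℝ} (h : IsProbZ ν) (t : ℝ) :
    Summable (fun k : ℤ => ‖(ν k : ℂ) * eC k t‖) := by
  have he : (fun k : ℤ => ‖(ν k : ℂ) * eC k t‖) = fun k => ν k := by
    funext k
    rw [norm_mul, abs_eC, mul_one,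
      Complex.norm_of_nonneg (h.1 k)]
  rw [he]
  exact h.2.summable

lemma conv_hasSum {R : Type*} [NormedRing R] [CompleteSpace R] (f g : ℤ → R)
    (hf : Summable fun k => ‖f k‖) (hg : Summable fun k => ‖g k‖) {a b : R}
    (ha : HasSum f a) (hb : HasSum g b) :
    HasSum (fun k : ℤ => ∑' j : ℤ, f j * g (k - j)) (a * b) := by
  have hF : Summable (fun p : ℤ × ℤ => f p.1 * g p.2) := summable_mul_of_summable_norm hf hg
  have hFab : HasSum (fun p : ℤ × ℤ => f p.1 * g p.2) (a * b) := ha.mul hb hF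
  let E : ℤ × ℤ ≃ ℤ × ℤ :=
    ⟨fun p => (p.2, p.1 - p.2), fun p => (p.2 + p.1, p.1),
      fun p => by simp, fun p => by simp⟩
  have hFE : HasSum ((fun p : ℤ × ℤ => f p.1 * g p.2) ∘ E) (a * b) :=
    E.hasSum_iff.mpr hFab
  have hFEs : Summable ((fun p : ℤ × ℤ => f p.1 * g p.2) ∘ E) := hFE.summable
  exact hFE.prod_fiberwise fun k => (hFEs.prod_factor k).hasSum

lemma isProbZ_convZ {ν₁ ν₂ : ℤ → ℝ} (h1 : IsProbZ ν₁) (h2 : IsProbZ ν₂) :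
    IsProbZ (convZ ν₁ ν₂) := by
  have hn1 : Summable (fun k : ℤ => ‖ν₁ k‖) := by
    simpa only [Real.norm_eq_abs, abs_of_nonneg (h1.1 _)] using h1.2.summable
  have hn2 : Summable (fun k : ℤ => ‖ν₂ k‖) := by
    simpa only [Real.norm_eq_abs, abs_of_nonneg (h2.1 _)] using h2.2.summable
  refine ⟨fun k => tsum_nonneg fun j => mul_nonneg (h1.1 j) (h2.1 (k - j)), ?_⟩
  have := conv_hasSum ν₁ ν₂ hn1 hn2 h1.2 h2.2
  rw [mul_one] at this
  exact this

lemma fourier_convZ {ν₁ ν₂ : ℤ → ℝ} (h1 : IsProbZ ν₁) (h2 : IsProbZ ν₂) (t : ℝ) :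
    fourierZ (convZ ν₁ ν₂) t = fourierZ ν₁ t * fourierZ ν₂ t := by
  have hf := summable_norm_term h1 t
  have hg := summable_norm_term h2 t
  have key := conv_hasSum (fun k : ℤ => (ν₁ k : ℂ) * eC k t)
    (fun k : ℤ => (ν₂ k : ℂ) * eC k t) hf hg hf.of_norm.hasSum hg.of_norm.hasSum
  rw [← fourierZ_eq, ← fourierZ_eq] at key
  have hfun : ∀ k : ℤ,
      (∑' j : ℤ, ((ν₁ j : ℂ) * eC j t) * ((ν₂ (k - j) : ℂ) * eC (k - j) t)) =
        ((convZ ν₁ ν₂ k : ℝ) : ℂ) * eC k t := by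
    intro k
    have h1' : ∀ j : ℤ, ((ν₁ j : ℂ) * eC j t) * ((ν₂ (k - j) : ℂ) * eC (k - j) t) =
        ((ν₁ j : ℂ) * (ν₂ (k - j) : ℂ)) * eC k t := by
      intro j
      have : eC j t * eC (k - j) t = eC k t := by
        rw [← eC_add]; ring_nf
      rw [← this]; ring
    rw [tsum_congr h1', tsum_mul_right, convZ, Complex.ofReal_tsum]
    push_cast
    rfl
  rw [fourierZ_eq, ← (tsum_congr hfun)]
  exact ((key.congr_fun fun k => (hfun k).symm).tsum_eq).symm ▸ key.tsum_eq

lemma abs_fourier_le_one {ν : ℤ → ℝ} (h : IsProbZ ν) (t : ℝ) :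
    ‖fourierZ ν t‖ ≤ 1 := by
  rw [fourierZ_eq]
  calc ‖∑' k : ℤ, (ν k : ℂ) * eC k t‖ ≤ ∑' k : ℤ, ‖(ν k : ℂ) * eC k t‖ :=
        norm_tsum_le_tsum_norm (summable_norm_term h t)
    _ = ∑' k : ℤ, ν k := by
        refine tsum_congr fun k => ?_
        rw [norm_mul, abs_eC, mul_one,
          Complex.norm_of_nonneg (h.1 k)]
    _ = 1 := h.2.tsum_eq

lemma isProbZ_convProd {ν : ℕ → ℤ → ℝ} (hprob : ∀ i, 1 ≤ i → IsProbZ (ν i)) :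
    ∀ n, IsProbZ (convProd ν n) := by
  intro n
  induction n with
  | zero =>
    refine ⟨fun k => ?_, ?_⟩
    · dsimp [convProd]; split <;> norm_num
    · exact hasSum_ite_eq 0 1
  | succ n ih =>
    exact isProbZ_convZ ih (hprob (n + 1) (by omega))

lemma fourier_convProd {ν : ℕ → ℤ → ℝ} (hprob : ∀ i, 1 ≤ i → IsProbZ (ν i)) :
    ∀ n t, fourierZ (convProd ν n) t = ∏ i ∈ Finset.range n, fourierZ (ν (i + 1)) t := by
  intro n
  induction n with
  | zero =>
    intro t
    rw [fourierZ_eq, tsum_eq_single (0 : ℤ) (fun k hk => by simp [convProd, hk])]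
    simp [convProd, eC_zero]
  | succ n ih =>
    intro t
    show fourierZ (convZ (convProd ν n) (ν (n + 1))) t = _
    rw [fourier_convZ (isProbZ_convProd hprob n) (hprob (n + 1) (by omega)) t, ih t,
      Finset.prod_range_succ]

end FDDBaux

/-- **Second estimate in the proof of Lemma 1.4.7(1).** Using the Gaussian
Fourier decay, for `4^{k-1} ≤ n < 4^k` (written here as `4^k ≤ n < 4^{k+1}`) and
`t ≠ 0`, one has `|μ̂ₙ(t) - μ̂_{4^{k-1}}(t)| ≤ C'/(4^k t²)`. -/
theorem fourier_difference_decay_bound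
    (ν : ℕ → ℤ → ℝ)
    (hprob : ∀ i, 1 ≤ i → IsProbZ (ν i))
    (haper : ∀ i, 1 ≤ i → StrictlyAperiodic (ν i))
    (hexp : ∀ i, 1 ≤ i → HasSum (fun k : ℤ => (k : ℝ) * ν i k) 0)
    (C : ℝ) (hC : 0 < C) (N₀ : ℕ) (hN₀ : 0 < N₀)
    (hfour : ∀ n, N₀ < n → ∀ t ∈ Set.Ico (-(1 : ℝ)/2) (1/2),
      ‖fourierZ (ν n) t‖ ≤ Real.exp (-C * t ^ 2))
    (μ : ℕ → ℤ → ℝ) (hμ : μ = convProd ν) :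
    ∃ C' : ℝ, 0 ≤ C' ∧ ∀ k n : ℕ, 4 ^ k ≤ n → n < 4 ^ (k + 1) →
      ∀ t ∈ Set.Ico (-(1 : ℝ)/2) (1/2), t ≠ 0 →
        ‖fourierZ (μ n) t - fourierZ (μ (4 ^ k)) t‖ ≤
          C' / (4 ^ (k + 1) * t ^ 2) := by
  classical
  refine ⟨16 / C + 4 * N₀, by positivity, ?_⟩
  intro k n h1 h2 t ht htne
  subst hμ
  set m : ℕ := 4 ^ k with hm
  obtain ⟨d, rfl⟩ : ∃ d, n = m + d := ⟨n - m, by omega⟩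
  have htsq : (0 : ℝ) < t ^ 2 := by positivity
  have htle : t ^ 2 ≤ 1 / 4 := by
    have h1' : -(1 / 2 : ℝ) ≤ t := by
      have := ht.1; linarith [ht.1]
    have h2' : t < 1 / 2 := ht.2
    nlinarith
  have hDpos : (0 : ℝ) < 4 ^ (k + 1) * t ^ 2 := by positivity
  -- Fourier transforms as products
  have hfp : ∀ N, fourierZ (convProd ν N) t
      = ∏ i ∈ Finset.range N, fourierZ (ν (i + 1)) t :=
    fun N => FDDBaux.fourier_convProd hprob N t
  set F : ℕ → ℂ := fun i => fourierZ (ν (i + 1)) t with hF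
  have hFle : ∀ i, ‖F i‖ ≤ 1 := fun i =>
    FDDBaux.abs_fourier_le_one (hprob (i + 1) (by omega)) t
  -- split the product
  have hsplit : fourierZ (convProd ν (m + d)) t - fourierZ (convProd ν m) t
      = (∏ i ∈ Finset.range m, F i)
        * ((∏ i ∈ Finset.range d, F (m + i)) - 1) := by
    rw [hfp, hfp, Finset.prod_range_add]
    ring
  have habsQ : ‖(∏ i ∈ Finset.range (d), F (m + i)) - 1‖ ≤ 2 := by
    have h1' : ‖∏ i ∈ Finset.range (d), F (m + i)‖ ≤ 1 := by
      rw [norm_prod]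
      calc ∏ i ∈ Finset.range (d), ‖F (m + i)‖
          ≤ ∏ i ∈ Finset.range (d), 1 :=
            Finset.prod_le_prod (fun i _ => norm_nonneg _) (fun i _ => hFle _)
        _ = 1 := by simp
    calc ‖(∏ i ∈ Finset.range (d), F (m + i)) - 1‖
        ≤ ‖∏ i ∈ Finset.range (d), F (m + i)‖ + ‖(1 : ℂ)‖ :=
          norm_sub_le _ _
      _ ≤ 1 + 1 := by rw [norm_one]; exact add_le_add h1' le_rfl
      _ = 2 := by norm_num
  have habsP_le_one : ‖∏ i ∈ Finset.range m, F i‖ ≤ 1 := by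
    rw [norm_prod]
    calc ∏ i ∈ Finset.range m, ‖F i‖ ≤ ∏ i ∈ Finset.range m, 1 :=
          Finset.prod_le_prod (fun i _ => norm_nonneg _) (fun i _ => hFle _)
      _ = 1 := by simp
  rw [hsplit, norm_mul]
  by_cases hcase : 2 * N₀ ≤ m
  · -- main case: use the Gaussian decay
    have hN₀m : N₀ ≤ m := by omega
    have habsP : ‖∏ i ∈ Finset.range m, F i‖
        ≤ Real.exp (-C * t ^ 2) ^ (m - N₀) := by
      rw [norm_prod]
      calc ∏ i ∈ Finset.range m, ‖F i‖
          ≤ ∏ i ∈ Finset.Ico N₀ m, ‖F i‖ := by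
            rw [← Finset.prod_range_mul_prod_Ico (fun i => ‖F i‖) hN₀m]
            have hle1 : ∏ i ∈ Finset.range N₀, ‖F i‖ ≤ 1 :=
              Finset.prod_le_one (fun i _ => norm_nonneg _) (fun i _ => hFle i)
            have hnn : (0:ℝ) ≤ ∏ i ∈ Finset.Ico N₀ m, ‖F i‖ :=
              Finset.prod_nonneg fun i _ => norm_nonneg _
            nlinarith
        _ ≤ ∏ _i ∈ Finset.Ico N₀ m, Real.exp (-C * t ^ 2) := by
            refine Finset.prod_le_prod (fun i _ => norm_nonneg _) ?_
            intro i hi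
            simp only [Finset.mem_Ico] at hi
            exact hfour (i + 1) (by omega) t ht
        _ = Real.exp (-C * t ^ 2) ^ (m - N₀) := by
            rw [Finset.prod_const, Nat.card_Ico]
    have hexp1 : Real.exp (-C * t ^ 2) ^ (m - N₀)
        = Real.exp (-(C * t ^ 2) * ((m : ℝ) - N₀)) := by
      rw [← Real.exp_nat_mul]
      congr 1
      rw [Nat.cast_sub hN₀m]
      ring
    have hexp2 : Real.exp (-(C * t ^ 2) * ((m : ℝ) - N₀))
        ≤ Real.exp (-(C * t ^ 2 * m / 2)) := by
      apply Real.exp_le_exp.mpr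
      have hm2 : (2 * N₀ : ℝ) ≤ m := by exact_mod_cast hcase
      nlinarith [mul_nonneg (mul_nonneg hC.le htsq.le) (by linarith : (0:ℝ) ≤ (m:ℝ) - 2 * N₀)]
    have hxpos : (0 : ℝ) < C * t ^ 2 * m / 2 := by
      have : (0 : ℝ) < (m : ℝ) := by positivity
      positivity
    have hexp3 : Real.exp (-(C * t ^ 2 * m / 2)) ≤ 1 / (C * t ^ 2 * m / 2) := by
      rw [Real.exp_neg, one_div]
      exact inv_anti₀ hxpos (by linarith [Real.add_one_le_exp (C * t ^ 2 * ↑m / 2)])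
    have hmr : ((4 : ℝ) ^ (k + 1)) = 4 * (m : ℝ) := by
      push_cast [hm]
      ring
    calc ‖∏ i ∈ Finset.range m, F i‖
          * ‖(∏ i ∈ Finset.range (d), F (m + i)) - 1‖
        ≤ (1 / (C * t ^ 2 * m / 2)) * 2 := by
          apply mul_le_mul _ habsQ (norm_nonneg _) (by positivity)
          exact le_trans habsP (by rw [hexp1]; exact le_trans hexp2 hexp3)
      _ = (16 / C) / (4 ^ (k + 1) * t ^ 2) := by
          rw [hmr]
          have hmpos : (0 : ℝ) < (m : ℝ) := by positivity
          field_simp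
          ring
      _ ≤ (16 / C + 4 * N₀) / (4 ^ (k + 1) * t ^ 2) := by
          gcongr
          linarith [show (0:ℝ) ≤ 4 * (N₀:ℝ) by positivity]
  · -- small case: trivial bound by 2
    have hbound : ‖∏ i ∈ Finset.range m, F i‖
        * ‖(∏ i ∈ Finset.range (d), F (m + i)) - 1‖ ≤ 2 := by
      calc ‖∏ i ∈ Finset.range m, F i‖
            * ‖(∏ i ∈ Finset.range (d), F (m + i)) - 1‖
          ≤ 1 * 2 := mul_le_mul habsP_le_one habsQ (norm_nonneg _) one_pos.le
        _ = 2 := by ring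
    refine le_trans hbound ?_
    rw [le_div_iff₀ hDpos]
    have hmN : (m : ℝ) < 2 * N₀ := by exact_mod_cast not_le.mp hcase
    have h4 : (4 : ℝ) ^ (k + 1) = 4 * (m : ℝ) := by push_cast [hm]; ring
    have hmt : 0 ≤ (m : ℝ) * (1 / 4 - t ^ 2) := mul_nonneg (by positivity) (by linarith)
    have h16 : (0:ℝ) ≤ 16 / C := by positivity
    rw [h4]
    nlinarith [hmt, h16, hmN]
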